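/- arXiv:2012.12937 — 2 statements merged into one kernel-verified Lean document; each statement's English description precedes it below -/
import Mathlib

section
/- Assume the measurable selection condition holds. Then for all y⁰, y¹ in the interior C° of C, the two auxiliary controllability times coincide: T̂_C(y⁰,y¹) = T̄_C(y⁰,y¹). (This holds for an arbitrary measurable constraint set C; no convexity or boundedness of C is needed.) -/
noncomputable section
open MeasureTheory Set RealInnerProductSpace
open scoped ENNReal

/-- Euclidean state space `ℝ^n`. -/
abbrev Euc (n : ℕ) := EuclideanSpace ℝ (Fin n)

/-- Orthogonal projection onto a subspace, viewed as a map into the ambient space. -/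
noncomputable def projS {n : ℕ} (G : Submodule ℝ (Euc n)) (x : Euc n) : Euc n :=
  (G.orthogonalProjectionOnto x : Euc n)

/-- Times for the auxiliary system `ż(t) = F_H(z(t) + h⊥(t))`, `z(t) + h⊥(t) ∈ C` a.e.,
with `h⊥` a measurable `H^⊥`-valued function, steering `P_H y0` to `P_H y1`. -/
def hatTimes {n : ℕ} (F : Euc n → Euc n) (H : Submodule ℝ (Euc n))
    (C : Set (Euc n)) (y0 y1 : Euc n) : Set ℝ :=
  {T | 0 < T ∧ ∃ z hp : ℝ → Euc n,
    Measurable hp ∧ (∀ t, hp t ∈ Hᗮ) ∧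
    IntervalIntegrable (fun s => projS H (F (z s + hp s))) volume 0 T ∧
    (∀ t ∈ Icc (0:ℝ) T, z t = projS H y0 + ∫ s in (0:ℝ)..t, projS H (F (z s + hp s))) ∧
    (∀ᵐ t ∂(volume.restrict (Icc (0:ℝ) T)), z t + hp t ∈ C) ∧
    z T = projS H y1}

/-- The auxiliary controllability time `T̂_C(y0, y1)` (with `inf ∅ = ∞`). -/
noncomputable def hatTime {n : ℕ} (F : Euc n → Euc n) (H : Submodule ℝ (Euc n))
    (C : Set (Euc n)) (y0 y1 : Euc n) : ℝ≥0∞ :=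
  sInf (ENNReal.ofReal '' hatTimes F H C y0 y1)

/-- Times for the differential inclusion `ż(t) ∈ F_H((z(t) + H^⊥) ∩ C)` steering
`P_H y0` to `P_H y1`; `z` is absolutely continuous, encoded via its a.e. derivative `v`. -/
def slowTimes {n : ℕ} (F : Euc n → Euc n) (H : Submodule ℝ (Euc n))
    (C : Set (Euc n)) (y0 y1 : Euc n) : Set ℝ :=
  {T | 0 < T ∧ ∃ z v : ℝ → Euc n,
    IntervalIntegrable v volume 0 T ∧
    (∀ t ∈ Icc (0:ℝ) T, z t = projS H y0 + ∫ s in (0:ℝ)..t, v s) ∧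
    (∀ᵐ t ∂(volume.restrict (Icc (0:ℝ) T)),
      v t ∈ (fun x => projS H (F x)) '' (((fun w => z t + w) '' (Hᗮ : Set (Euc n))) ∩ C)) ∧
    z T = projS H y1}

/-- The auxiliary controllability time `T̄_C(y0, y1)` (with `inf ∅ = ∞`). -/
noncomputable def slowTime {n : ℕ} (F : Euc n → Euc n) (H : Submodule ℝ (Euc n))
    (C : Set (Euc n)) (y0 y1 : Euc n) : ℝ≥0∞ :=
  sInf (ENNReal.ofReal '' slowTimes F H C y0 y1)

/-- The measurable selection condition: a Borel measurable map `f` defined on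
`D_f = {(h₁,h₂) ∈ H × H : ∃ h⊥ ∈ H^⊥, h₁ = F_H(h₂ + h⊥) ∧ h₂ + h⊥ ∈ C}` with
`f(h₁,h₂) ∈ H^⊥`, `h₁ = F_H(h₂ + f(h₁,h₂))` and `h₂ + f(h₁,h₂) ∈ C` on `D_f`. -/
def MeasSelection {n : ℕ} (F : Euc n → Euc n) (H : Submodule ℝ (Euc n))
    (C : Set (Euc n)) : Prop :=
  ∃ f : Euc n × Euc n → Euc n, Measurable f ∧
    ∀ h1 h2 : Euc n, h1 ∈ H → h2 ∈ H →
      (∃ hp ∈ Hᗮ, h1 = projS H (F (h2 + hp)) ∧ h2 + hp ∈ C) →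
      f (h1, h2) ∈ Hᗮ ∧ h1 = projS H (F (h2 + f (h1, h2))) ∧ h2 + f (h1, h2) ∈ C


section AuxLemmas

variable {n : ℕ}

lemma projS_mem (G : Submodule ℝ (Euc n)) (x : Euc n) : projS G x ∈ G :=
  (G.orthogonalProjectionOnto x).2

lemma projS_eq_self {G : Submodule ℝ (Euc n)} {x : Euc n} (hx : x ∈ G) : projS G x = x :=
  Submodule.starProjection_eq_self_iff.mpr hx

/-- The two sets of admissible times coincide. -/
lemma hatTimes_eq_slowTimes (F : Euc n → Euc n) (H : Submodule ℝ (Euc n))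
    (C : Set (Euc n)) (hsel : MeasSelection F H C) (y0 y1 : Euc n) :
    hatTimes F H C y0 y1 = slowTimes F H C y0 y1 := by
  ext T
  constructor
  · rintro ⟨hTpos, z, hp, hpm, hpmem, hint, hz, hCmem, hzT⟩
    refine ⟨hTpos, z, fun s => projS H (F (z s + hp s)), hint, hz, ?_, hzT⟩
    filter_upwards [hCmem] with t ht
    exact ⟨z t + hp t, ⟨⟨hp t, hpmem t, rfl⟩, ht⟩, rfl⟩
  · rintro ⟨hTpos, z, v, hvint, hz, hae, hzT⟩
    obtain ⟨f, hfm, hf⟩ := hsel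
    have hT0 : (0:ℝ) ≤ T := hTpos.le
    have hresteq : volume.restrict (Set.Ioc (0:ℝ) T) = volume.restrict (Set.Icc (0:ℝ) T) :=
      Measure.restrict_congr_set Ioc_ae_eq_Icc
    have hioc : MeasureTheory.IntegrableOn v (Set.Ioc 0 T) :=
      (intervalIntegrable_iff_integrableOn_Ioc_of_le hT0).1 hvint
    set v' : ℝ → Euc n := hioc.aestronglyMeasurable.mk v with hv'def
    have hv'sm : StronglyMeasurable v' := hioc.aestronglyMeasurable.stronglyMeasurable_mk
    have hveq : v =ᵐ[volume.restrict (Set.Ioc (0:ℝ) T)] v' :=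
      hioc.aestronglyMeasurable.ae_eq_mk
    set v0 : ℝ → Euc n := (Set.Ioc (0:ℝ) T).indicator v' with hv0def
    have hv0m : Measurable v0 := hv'sm.measurable.indicator measurableSet_Ioc
    have hveq0 : v =ᵐ[volume.restrict (Set.Icc (0:ℝ) T)] v0 := by
      rw [← hresteq]
      filter_upwards [hveq, ae_restrict_mem measurableSet_Ioc] with s hs hmem
      rw [hs, hv0def, Set.indicator_of_mem hmem]
    have hv0int : MeasureTheory.Integrable v0 volume := by
      have h1 : MeasureTheory.IntegrableOn v' (Set.Ioc (0:ℝ) T) volume := hioc.congr hveq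
      exact h1.integrable_indicator measurableSet_Ioc
    have hv0iint : ∀ a b : ℝ, IntervalIntegrable v0 volume a b := fun a b =>
      hv0int.intervalIntegrable
    have haeimp : ∀ᵐ s ∂volume, s ∈ Set.Icc (0:ℝ) T →
        v s ∈ (fun x => projS H (F x)) '' (((fun w => z s + w) '' (Hᗮ : Set (Euc n))) ∩ C) :=
      ae_imp_of_ae_restrict hae
    have hveq0' : ∀ᵐ s ∂volume, s ∈ Set.Icc (0:ℝ) T → v s = v0 s :=
      ae_imp_of_ae_restrict hveq0
    have hsub : ∀ t ∈ Set.Icc (0:ℝ) T, ∀ s ∈ Set.uIoc (0:ℝ) t, s ∈ Set.Icc (0:ℝ) T := by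
      intro t ht s hs
      rw [Set.uIoc_of_le ht.1] at hs
      exact ⟨hs.1.le, hs.2.trans ht.2⟩
    have hint_eq : ∀ t ∈ Set.Icc (0:ℝ) T,
        (∫ s in (0:ℝ)..t, v s) = ∫ s in (0:ℝ)..t, v0 s := by
      intro t ht
      apply intervalIntegral.integral_congr_ae
      filter_upwards [hveq0'] with s hs hmem
      exact hs (hsub t ht s hmem)
    set PH : Euc n →L[ℝ] Euc n := H.subtypeL.comp H.orthogonalProjectionOnto with hPHdef
    have hPHapply : ∀ x, PH x = projS H x := fun x => rfl
    have hzmem : ∀ t ∈ Set.Icc (0:ℝ) T, z t ∈ H := by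
      intro t ht
      have hvint' : IntervalIntegrable v volume 0 t :=
        hvint.mono_set (by
          rw [Set.uIcc_of_le ht.1, Set.uIcc_of_le hT0]
          exact Set.Icc_subset_Icc le_rfl ht.2)
      have h2 : (∫ s in (0:ℝ)..t, v s) ∈ H := by
        have e1 : (∫ s in (0:ℝ)..t, v s) = ∫ s in (0:ℝ)..t, PH (v s) := by
          apply intervalIntegral.integral_congr_ae
          filter_upwards [haeimp] with s hs hmem
          obtain ⟨x, _, hx⟩ := hs (hsub t ht s hmem)
          rw [← hx, hPHapply]
          exact (projS_eq_self (projS_mem H (F x))).symm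
        rw [e1, PH.intervalIntegral_comp_comm hvint', hPHapply]
        exact projS_mem H _
      rw [hz t ht]
      exact H.add_mem (projS_mem H y0) h2
    set z' : ℝ → Euc n := fun t => projS H y0 + ∫ s in (0:ℝ)..t, v0 s with hz'def
    have hz'cont : Continuous z' :=
      continuous_const.add (intervalIntegral.continuous_primitive hv0iint 0)
    have hz'eq : ∀ t ∈ Set.Icc (0:ℝ) T, z t = z' t := by
      intro t ht
      rw [hz t ht, hz'def, hint_eq t ht]
    set PHp : Euc n →L[ℝ] Euc n := Hᗮ.subtypeL.comp Hᗮ.orthogonalProjectionOnto with hPHpdef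
    have hPHpapply : ∀ x, PHp x = projS Hᗮ x := fun x => rfl
    set hp : ℝ → Euc n := fun t => PHp (f (v0 t, z' t)) with hpdef
    have hpm : Measurable hp :=
      PHp.continuous.measurable.comp (hfm.comp (hv0m.prodMk hz'cont.measurable))
    have hpmem : ∀ t, hp t ∈ Hᗮ := fun t => (Hᗮ.orthogonalProjectionOnto _).2
    have hKey : ∀ᵐ t ∂(volume.restrict (Set.Icc (0:ℝ) T)),
        v t = projS H (F (z t + hp t)) ∧ z t + hp t ∈ C := by
      filter_upwards [ae_restrict_mem measurableSet_Icc, hveq0, hae] with t htI htv htm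
      obtain ⟨x, ⟨⟨w, hwmem, hwx⟩, hxC⟩, hvx⟩ := htm
      have hwx' : z t + w = x := hwx
      have hvx' : projS H (F x) = v t := hvx
      have hvH : v t ∈ H := by rw [← hvx']; exact projS_mem H (F x)
      have hsel' := hf (v t) (z t) hvH (hzmem t htI)
        ⟨w, hwmem, by rw [hwx']; exact hvx'.symm, by rw [hwx']; exact hxC⟩
      have hpt : hp t = f (v t, z t) := by
        rw [hpdef]
        simp only
        rw [← htv, ← hz'eq t htI, hPHpapply]
        exact projS_eq_self hsel'.1
      exact ⟨hpt ▸ hsel'.2.1, hpt ▸ hsel'.2.2⟩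
    have hKeyIoc : ∀ᵐ t ∂(volume.restrict (Set.Ioc (0:ℝ) T)),
        v t = projS H (F (z t + hp t)) ∧ z t + hp t ∈ C := by
      rw [hresteq]; exact hKey
    have hintnew : IntervalIntegrable (fun s => projS H (F (z s + hp s))) volume 0 T := by
      rw [intervalIntegrable_iff_integrableOn_Ioc_of_le hT0]
      exact hioc.congr (hKeyIoc.mono fun t ht => ht.1)
    have hKeyimp : ∀ᵐ s ∂volume, s ∈ Set.Icc (0:ℝ) T →
        v s = projS H (F (z s + hp s)) :=
      ae_imp_of_ae_restrict (hKey.mono fun t ht => ht.1)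
    refine ⟨hTpos, z, hp, hpm, hpmem, hintnew, ?_, hKey.mono fun t ht => ht.2, hzT⟩
    intro t ht
    rw [hz t ht]
    congr 1
    apply intervalIntegral.integral_congr_ae
    filter_upwards [hKeyimp] with s hs hmem
    exact hs (hsub t ht s hmem)

end AuxLemmas

/-- Lemma 1 of the paper.  For the system `ẏ = F(y) + Bu` with
`F` Lipschitz, `B` an injective linear map `ℝ^m → ℝ^n` (`m < n`), an arbitrary
measurable constraint set `C`, and `H = (ran B)^⊥`: under the measurable selection
condition, for all `y⁰, y¹` in the interior of `C` the two auxiliary controllability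
times coincide: `T̂_C(y⁰, y¹) = T̄_C(y⁰, y¹)`. -/
theorem hatTime_eq_slowTime {n m : ℕ} (hmn : m < n)
    (F : Euc n → Euc n) (L_F : ℝ) (hLF : 0 < L_F) (hF : LipschitzWith L_F.toNNReal F)
    (B : Euc m →ₗ[ℝ] Euc n) (hB : Function.Injective B)
    (C : Set (Euc n)) (hC : MeasurableSet C)
    (hsel : MeasSelection F (LinearMap.range B)ᗮ C)
    (y0 y1 : Euc n) (hy0 : y0 ∈ interior C) (hy1 : y1 ∈ interior C) :
    hatTime F (LinearMap.range B)ᗮ C y0 y1 = slowTime F (LinearMap.range B)ᗮ C y0 y1 := by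
  unfold hatTime slowTime
  rw [hatTimes_eq_slowTimes F _ C hsel y0 y1]
end
end

section
/- Let n = 3, m = 1, C = [−2,2]³, B u = (0,0,u)ᵀ, and let F : ℝ³ → ℝ³ be continuous and Lipschitz satisfying: (1) ⟨F(x), (0,1,0)ᵀ⟩ > 0 for every x ∈ C not lying in {(α,0,1)ᵀ : α ∈ [−1,1]} ∪ {(α,0,0)ᵀ : α ∈ [−1,1]}; (2) F((α,0,1)ᵀ) = F((β,0,0)ᵀ) = (1,0,0)ᵀ for α ∈ [−1,0], β ∈ [0,1]; (3) F((α,0,1)ᵀ) = F((β,0,0)ᵀ) = (−1,0,0)ᵀ for α ∈ [1/2,1], β ∈ [−1,−1/2]. Let y⁰ = (−1,0,1)ᵀ and y¹ = (1,0,0)ᵀ. Then T_C(y⁰,y¹) = ∞, i.e. y¹ is not reachable from y⁰ under the state constraint C. -/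
noncomputable section
open MeasureTheory Set RealInnerProductSpace
open scoped ENNReal

/-- The set of admissible controllability times `T` for the system `ẏ = F(y) + B u`
with state constraint `y(t) ∈ C`, steering `y0` to `y1`.  The control `u` is a
measurable essentially bounded function; the absolutely continuous trajectory `y`
is encoded via the integral equation. -/
def ctrlTimes {n m : ℕ} (F : Euc n → Euc n) (B : Euc m →ₗ[ℝ] Euc n)
    (C : Set (Euc n)) (y0 y1 : Euc n) : Set ℝ :=
  {T | 0 < T ∧ ∃ u : ℝ → Euc m, ∃ y : ℝ → Euc n,
    Measurable u ∧ (∃ M : ℝ, ∀ t ∈ Icc (0:ℝ) T, ‖u t‖ ≤ M) ∧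
    ContinuousOn y (Icc 0 T) ∧
    IntervalIntegrable (fun s => F (y s) + B (u s)) volume 0 T ∧
    (∀ t ∈ Icc (0:ℝ) T, y t = y0 + ∫ s in (0:ℝ)..t, (F (y s) + B (u s))) ∧
    (∀ t ∈ Icc (0:ℝ) T, y t ∈ C) ∧ y 0 = y0 ∧ y T = y1}

/-- The minimal controllability time `T_C(y0, y1)` (with the convention `inf ∅ = ∞`). -/
noncomputable def minTime {n m : ℕ} (F : Euc n → Euc n) (B : Euc m →ₗ[ℝ] Euc n)
    (C : Set (Euc n)) (y0 y1 : Euc n) : ℝ≥0∞ :=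
  sInf (ENNReal.ofReal '' ctrlTimes F B C y0 y1)

/-- The vector `(a, b, c)ᵀ ∈ ℝ³`. -/
noncomputable def v3 (a b c : ℝ) : Euc 3 := (WithLp.equiv 2 _).symm ![a, b, c]

/-- The control map `B : ℝ → ℝ³`, `u ↦ (0, 0, u)ᵀ`. -/
noncomputable def Bcol3 : Euc 1 →ₗ[ℝ] Euc 3 :=
  Matrix.toEuclideanLin (!![0; 0; 1] : Matrix (Fin 3) (Fin 1) ℝ)

/-- The cube `C = [-2, 2]³`. -/
def cube3 : Set (Euc 3) := {x : Euc 3 | ∀ i : Fin 3, x i ∈ Icc (-2:ℝ) 2}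

/-- Example 1 of the paper.  Let `C = [-2,2]³`, `Bu = (0,0,u)ᵀ`,
and let `F : ℝ³ → ℝ³` be Lipschitz and satisfy:
(1) `⟨F(x), (0,1,0)ᵀ⟩ > 0` for every `x ∈ C` outside
`{(α,0,1)ᵀ : α ∈ [-1,1]} ∪ {(α,0,0)ᵀ : α ∈ [-1,1]}`;
(2) `F((α,0,1)ᵀ) = F((β,0,0)ᵀ) = (1,0,0)ᵀ` for `α ∈ [-1,0]`, `β ∈ [0,1]`;
(3) `F((α,0,1)ᵀ) = F((β,0,0)ᵀ) = (-1,0,0)ᵀ` for `α ∈ [1/2,1]`, `β ∈ [-1,-1/2]`.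
Then `y¹ = (1,0,0)ᵀ` is not reachable from `y⁰ = (-1,0,1)ᵀ` under the state
constraint `C`: `T_C(y⁰, y¹) = ∞`. -/
theorem example1_not_reachable
    (F : Euc 3 → Euc 3) (L_F : NNReal) (hF : LipschitzWith L_F F)
    (hF1 : ∀ x ∈ cube3,
      x ∉ ((fun α => v3 α 0 1) '' Icc (-1:ℝ) 1 ∪ (fun α => v3 α 0 0) '' Icc (-1:ℝ) 1) →
      (0:ℝ) < ⟪F x, v3 0 1 0⟫)
    (hF2 : (∀ α ∈ Icc (-1:ℝ) 0, F (v3 α 0 1) = v3 1 0 0) ∧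
           (∀ β ∈ Icc (0:ℝ) 1, F (v3 β 0 0) = v3 1 0 0))
    (hF3 : (∀ α ∈ Icc (1/2:ℝ) 1, F (v3 α 0 1) = v3 (-1) 0 0) ∧
           (∀ β ∈ Icc (-1:ℝ) (-1/2), F (v3 β 0 0) = v3 (-1) 0 0)) :
    minTime F Bcol3 cube3 (v3 (-1) 0 1) (v3 1 0 0) = ⊤ := by
  have hempty : ctrlTimes F Bcol3 cube3 (v3 (-1) 0 1) (v3 1 0 0) = ∅ := by
    rw [Set.eq_empty_iff_forall_notMem]
    rintro T ⟨hT, u, y, hu_meas, hu_bdd, hy_cont, h_int, h_eq, h_C, h_y0, h_yT⟩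
    have hinner : ∀ z : Euc 3, ⟪z, v3 0 1 0⟫ = z 1 := by
      intro z
      simp [v3, PiLp.inner_apply, Fin.sum_univ_three, WithLp.equiv_symm_apply]
    -- F is nonnegative in the second coordinate on the cube
    have hFnonneg : ∀ x ∈ cube3, (0:ℝ) ≤ F x 1 := by
      intro x hx
      set e2 : Euc 3 := v3 0 1 0 with he2
      have he2i : ∀ i : Fin 3, e2 i = ![0,1,0] i := fun i => rfl
      have key : ∀ ε : ℝ, 0 < ε → ε ≤ 2 → x 1 = 0 → (0:ℝ) ≤ F (x + ε • e2) 1 := by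
        intro ε hε hε2 hx1
        have hco : ∀ i : Fin 3, (x + ε • e2) i = x i + ε * e2 i := fun i => rfl
        have hmem : x + ε • e2 ∈ cube3 := by
          intro i
          rw [hco i]
          fin_cases i <;> simp [he2i, hx1] <;>
            first
            | exact ⟨by have := (hx 0).1; linarith, by have := (hx 0).2; linarith⟩
            | exact ⟨by linarith, by linarith⟩
            | exact ⟨by have := (hx 2).1; linarith, by have := (hx 2).2; linarith⟩
        have hne : x + ε • e2 ∉
            ((fun α => v3 α 0 1) '' Icc (-1:ℝ) 1 ∪ (fun α => v3 α 0 0) '' Icc (-1:ℝ) 1) := by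
          rintro (⟨α, hα, hq⟩ | ⟨α, hα, hq⟩) <;>
          · have h1 : (x + ε • e2) 1 = 0 := by
              rw [← hq]; simp [v3, WithLp.equiv_symm_apply]
            rw [hco 1, he2i 1, hx1] at h1
            simp at h1
            linarith
        have := hF1 _ hmem hne
        rw [hinner] at this
        linarith
      by_cases hx1 : x 1 = 0
      · have hcont : ContinuousAt (fun ε : ℝ => F (x + ε • e2) 1) 0 := by
          exact ((EuclideanSpace.proj (1 : Fin 3)).continuous.comp
            (hF.continuous.comp (continuous_const.add
              (continuous_id.smul continuous_const)))).continuousAt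
        have hten : Filter.Tendsto (fun ε : ℝ => F (x + ε • e2) 1) (nhdsWithin 0 (Ioi 0))
            (nhds (F (x + (0:ℝ) • e2) 1)) := hcont.continuousWithinAt.tendsto
        have hev : ∀ᶠ ε in nhdsWithin (0:ℝ) (Ioi 0), 0 ≤ F (x + ε • e2) 1 := by
          filter_upwards [Ioo_mem_nhdsGT_of_mem (Set.mem_Ico.2 ⟨le_refl _, one_pos⟩)] with ε hε
          exact key ε hε.1 (by linarith [hε.2]) hx1
        have := ge_of_tendsto hten hev
        simpa using this
      · have hne : x ∉
            ((fun α => v3 α 0 1) '' Icc (-1:ℝ) 1 ∪ (fun α => v3 α 0 0) '' Icc (-1:ℝ) 1) := by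
          rintro (⟨α, hα, hq⟩ | ⟨α, hα, hq⟩) <;>
          · apply hx1
            rw [← hq]; simp [v3, WithLp.equiv_symm_apply]
        have := hF1 _ hx hne
        rw [hinner] at this
        linarith
    -- the second coordinate of the dynamics
    set f : ℝ → ℝ := fun s => F (y s) 1 with hf
    have hfc : ContinuousOn f (Icc 0 T) :=
      (EuclideanSpace.proj (1 : Fin 3)).continuous.comp_continuousOn
        (hF.continuous.comp_continuousOn hy_cont)
    have hB1 : ∀ w : Euc 1, Bcol3 w 1 = 0 := by
      intro w
      simp [Bcol3, Matrix.toEuclideanLin_apply, WithLp.equiv_symm_apply,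
        Matrix.mulVec, dotProduct]
    have hfnn : ∀ s ∈ Icc (0:ℝ) T, 0 ≤ f s := fun s hs => hFnonneg _ (h_C s hs)
    -- coordinate-1 of the integral equation
    have hcoord : ∀ t ∈ Icc (0:ℝ) T, y t 1 = ∫ s in (0:ℝ)..t, f s := by
      intro t ht
      have hint_t : IntervalIntegrable (fun s => F (y s) + Bcol3 (u s)) volume 0 t := by
        apply h_int.mono_set
        rw [uIcc_of_le ht.1, uIcc_of_le (le_trans ht.1 ht.2)]
        exact Icc_subset_Icc le_rfl ht.2
      have h1 : y t 1 = v3 (-1) 0 1 1 +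
          EuclideanSpace.proj (1 : Fin 3) (∫ s in (0:ℝ)..t, (F (y s) + Bcol3 (u s))) := by
        rw [h_eq t ht]; rfl
      rw [← (EuclideanSpace.proj (1 : Fin 3)).intervalIntegral_comp_comm hint_t] at h1
      have h2 : (fun s => EuclideanSpace.proj (1 : Fin 3) (F (y s) + Bcol3 (u s))) = f := by
        funext s
        have : EuclideanSpace.proj (1 : Fin 3) (F (y s) + Bcol3 (u s))
            = F (y s) 1 + Bcol3 (u s) 1 := rfl
        rw [this, hB1, add_zero]
      rw [h2] at h1
      have h3 : v3 (-1) 0 1 1 = 0 := by simp [v3, WithLp.equiv_symm_apply]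
      rw [h3, zero_add] at h1
      exact h1
    -- hence the integral of f over [0,t] is 0 for every t
    have hfint : ∀ a b : ℝ, a ∈ Icc (0:ℝ) T → b ∈ Icc (0:ℝ) T →
        IntervalIntegrable f volume a b := by
      intro a b ha hb
      apply (hfc.mono _).intervalIntegrable
      rw [uIcc_eq_union]
      exact union_subset (Icc_subset_Icc ha.1 hb.2) (Icc_subset_Icc hb.1 ha.2)
    have h0T : (0:ℝ) ∈ Icc (0:ℝ) T := ⟨le_refl _, hT.le⟩
    have hTT : T ∈ Icc (0:ℝ) T := ⟨hT.le, le_refl _⟩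
    have hIzero : ∀ t ∈ Icc (0:ℝ) T, (∫ s in (0:ℝ)..t, f s) = 0 := by
      intro t ht
      have hTzero : (∫ s in (0:ℝ)..T, f s) = 0 := by
        have := hcoord T hTT
        rw [h_yT] at this
        have h3 : v3 1 0 0 1 = 0 := by simp [v3, WithLp.equiv_symm_apply]
        rw [h3] at this
        exact this.symm
      have hsplit : (∫ s in (0:ℝ)..t, f s) + (∫ s in t..T, f s) = ∫ s in (0:ℝ)..T, f s :=
        intervalIntegral.integral_add_adjacent_intervals (hfint 0 t h0T ht) (hfint t T ht hTT)
      have hnn1 : 0 ≤ ∫ s in (0:ℝ)..t, f s :=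
        intervalIntegral.integral_nonneg ht.1
          (fun s hs => hfnn s ⟨hs.1, le_trans hs.2 ht.2⟩)
      have hnn2 : 0 ≤ ∫ s in t..T, f s :=
        intervalIntegral.integral_nonneg ht.2
          (fun s hs => hfnn s ⟨le_trans ht.1 hs.1, hs.2⟩)
      rw [hTzero] at hsplit
      linarith
    -- hence f vanishes on [0,T]
    have hfzero : ∀ s ∈ Icc (0:ℝ) T, f s = 0 := by
      intro s0 hs0
      by_contra hne
      have hpos : 0 < f s0 := lt_of_le_of_ne (hfnn s0 hs0) (Ne.symm hne)
      obtain ⟨δ, hδ, hδball⟩ := Metric.continuousWithinAt_iff.1 (hfc s0 hs0) (f s0 / 2)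
        (by linarith)
      have hhalf : ∀ s ∈ Icc (0:ℝ) T, dist s s0 < δ → 0 < f s := by
        intro s hs hd
        have := hδball hs hd
        rw [Real.dist_eq] at this
        have := abs_lt.1 this
        linarith [this.1]
      -- pick a nondegenerate interval [a,b] ⊆ Icc 0 T around s0 of width < δ
      obtain ⟨a, b, hab, haI, hbI, hsub⟩ :
          ∃ a b : ℝ, a < b ∧ a ∈ Icc (0:ℝ) T ∧ b ∈ Icc (0:ℝ) T ∧
            ∀ s ∈ Ioo a b, dist s s0 < δ := by
        rcases lt_or_eq_of_le hs0.2 with hlt | heq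
        · refine ⟨s0, min (s0 + δ/2) T, lt_min (by linarith) hlt, hs0,
            ⟨le_trans hs0.1 (le_min (by linarith) hlt.le), min_le_right _ _⟩, ?_⟩
          intro s hsi
          rw [Real.dist_eq, abs_lt]
          constructor
          · linarith [hsi.1]
          · have := lt_of_lt_of_le hsi.2 (min_le_left _ _); linarith
        · refine ⟨max 0 (s0 - δ/2), s0, max_lt (heq ▸ hT) (by linarith),
            ⟨le_max_left _ _, max_le hT.le (by linarith [hs0.2])⟩, hs0, ?_⟩
          intro s hsi
          rw [Real.dist_eq, abs_lt]
          constructor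
          · have := lt_of_le_of_lt (le_max_right 0 (s0 - δ/2)) hsi.1; linarith
          · linarith [hsi.2]
      have hposI : 0 < ∫ s in a..b, f s :=
        intervalIntegral.intervalIntegral_pos_of_pos_on (hfint a b haI hbI)
          (fun s hsi => hhalf s ⟨le_trans haI.1 hsi.1.le, le_trans hsi.2.le hbI.2⟩ (hsub s hsi))
          hab
      have hzeroI : (∫ s in a..b, f s) = 0 := by
        have hsplit : (∫ s in (0:ℝ)..a, f s) + (∫ s in a..b, f s) = ∫ s in (0:ℝ)..b, f s :=
          intervalIntegral.integral_add_adjacent_intervals (hfint 0 a h0T haI) (hfint a b haI hbI)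
        rw [hIzero a haI, hIzero b hbI] at hsplit
        linarith
      linarith
    -- hence the trajectory stays on the two segments
    have hseg : ∀ s ∈ Icc (0:ℝ) T, y s 2 = 1 ∨ y s 2 = 0 := by
      intro s hs
      by_cases hmem : y s ∈
          ((fun α => v3 α 0 1) '' Icc (-1:ℝ) 1 ∪ (fun α => v3 α 0 0) '' Icc (-1:ℝ) 1)
      · rcases hmem with ⟨α, hα, hq⟩ | ⟨α, hα, hq⟩
        · left; rw [← hq]; simp [v3, WithLp.equiv_symm_apply]
        · right; rw [← hq]; simp [v3, WithLp.equiv_symm_apply]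
      · exfalso
        have := hF1 _ (h_C s hs) hmem
        rw [hinner] at this
        have := hfzero s hs
        rw [hf] at this
        simp only at this
        linarith
    -- intermediate value theorem on the third coordinate: contradiction
    have hcont3 : ContinuousOn (fun s => y s 2) (Icc 0 T) :=
      (EuclideanSpace.proj (2 : Fin 3)).continuous.comp_continuousOn hy_cont
    have h02 : y 0 2 = 1 := by rw [h_y0]; simp [v3, WithLp.equiv_symm_apply]
    have hT2 : y T 2 = 0 := by rw [h_yT]; simp [v3, WithLp.equiv_symm_apply]
    have hivt := intermediate_value_Icc' hT.le hcont3
    rw [hT2, h02] at hivt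
    obtain ⟨s, hs, hval⟩ := hivt (Set.mem_Icc.2 ⟨by norm_num, by norm_num⟩ :
      (1/2 : ℝ) ∈ Icc (0:ℝ) 1)
    have hval' : y s 2 = 1/2 := hval
    rcases hseg s hs with h | h <;> rw [h] at hval' <;> norm_num at hval'
  rw [minTime, hempty]
  simp
end
end
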